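/- arXiv:1809.07973 — 3 statements merged into one kernel-verified Lean document; each statement's English description precedes it below -/
import Mathlib

section
/- The map sending a quadratic polynomial's quotient ring to pairs: if R is a unique factorization domain and f(t) = t^2 - Pt + Q ∈ R[t] factors as (t-θ₁)(t-θ₂) with θ₁, θ₂ ∈ R, θ₁ ≠ θ₂, and d = P^2 - 4Q, then R[t]/(f(t)) is isomorphic as an R-algebra to the subring H_R = {(x,y) ∈ R × R : x ≡ y mod √d} of R × R, via g(t) mod f(t) ↦ (g(θ₁), g(θ₂)). -/
open Polynomial

/-- If `R` is a UFD and `f(t) = t² - Pt + Q` factors as `(t-θ₁)(t-θ₂)` with distinct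
`θ₁ θ₂ ∈ R`, then `R[t]/(f)` is `R`-algebra isomorphic to the subalgebra
`H_R = {(x,y) ∈ R × R : √d ∣ x - y}` of `R × R` (where `√d = θ₁ - θ₂`),
via `g mod f ↦ (g(θ₁), g(θ₂))`. -/
theorem laxton_stmt0 (R : Type*) [CommRing R] [IsDomain R] [UniqueFactorizationMonoid R]
    (P Q θ₁ θ₂ : R) (hθ : θ₁ ≠ θ₂)
    (hfact : (X : R[X]) ^ 2 - C P * X + C Q = (X - C θ₁) * (X - C θ₂)) :
    ∃ (H : Subalgebra R (R × R))
      (e : (R[X] ⧸ Ideal.span {(X : R[X]) ^ 2 - C P * X + C Q}) ≃ₐ[R] H),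
      (∀ x : R × R, x ∈ H ↔ θ₁ - θ₂ ∣ x.1 - x.2) ∧
      ∀ g : R[X],
        (e (Ideal.Quotient.mk _ g) : R × R) = (g.eval θ₁, g.eval θ₂) := by
  set φ : R[X] →ₐ[R] R × R := AlgHom.prod (Polynomial.aeval θ₁) (Polynomial.aeval θ₂) with hφ
  have hker : RingHom.ker φ = Ideal.span {(X : R[X]) ^ 2 - C P * X + C Q} := by
    ext g
    rw [RingHom.mem_ker, Ideal.mem_span_singleton, hfact]
    constructor
    · intro h
      have h1 : (aeval θ₁) g = 0 ∧ (aeval θ₂) g = 0 := by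
        simpa [hφ, Prod.ext_iff] using h
      have d1 : X - C θ₁ ∣ g := dvd_iff_isRoot.mpr (by simpa using h1.1)
      have d2 : X - C θ₂ ∣ g := dvd_iff_isRoot.mpr (by simpa using h1.2)
      obtain ⟨h', rfl⟩ := d1
      have hp2 : Prime (X - C θ₂ : R[X]) := prime_X_sub_C θ₂
      rcases (hp2.dvd_mul.mp d2) with hd | hd
      · exfalso
        have := dvd_iff_isRoot.mp hd
        simp [IsRoot] at this
        exact hθ (by linear_combination -this)
      · exact mul_dvd_mul_left _ hd
    · rintro ⟨c, rfl⟩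
      simp [hφ, Prod.ext_iff]
  refine ⟨φ.range,
    (Ideal.quotientEquivAlgOfEq R hker.symm).trans (Ideal.quotientKerEquivRange φ), ?_, ?_⟩
  · intro x
    constructor
    · rintro ⟨g, rfl⟩
      simpa [hφ] using sub_dvd_eval_sub θ₁ θ₂ g
    · rintro ⟨c, hc⟩
      exact ⟨C c * (X - C θ₂) + C x.2, by
        simp [hφ, Prod.ext_iff]
        linear_combination -hc⟩
  · intro g
    rfl
end

section
/- Let P, Q ∈ ℤ, p an odd prime with p ∤ Q and D = P² - 4Q, and (F_n) the Lucas sequence. Then the rank r(p) (least positive n with p | F_n) exists and divides p - (D/p), where (D/p) is the Legendre symbol. -/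
open Polynomial


/-- For an odd prime `p` with `p ∤ Q`, the rank `r(p)` of the Lucas sequence (the least
positive `n` with `p ∣ F n`) exists and divides `p - (D/p)`, where `(D/p)` is the
Legendre symbol of `D = P² - 4Q`. -/
theorem laxton_stmt11 (P Q : ℤ) (p : ℕ) (hp : p.Prime) (hodd : p ≠ 2)
    (hQ : ¬ ((p : ℤ) ∣ Q)) (F : ℕ → ℤ) (h0 : F 0 = 0) (h1 : F 1 = 1)
    (hrec : ∀ n : ℕ, F (n + 2) = P * F (n + 1) - Q * F n) :
    ∃ r : ℕ, IsLeast {n : ℕ | 0 < n ∧ (p : ℤ) ∣ F n} r ∧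
      (r : ℤ) ∣ ((p : ℤ) - @legendreSym p ⟨hp⟩ (P ^ 2 - 4 * Q)) := by
  haveI : Fact p.Prime := ⟨hp⟩
  set D : ℤ := P ^ 2 - 4 * Q with hD
  have hple : 2 ≤ p := hp.two_le
  have hp2 : (2 : ZMod p) ≠ 0 := by
    intro h
    have h2 : p ∣ 2 := (ZMod.natCast_eq_zero_iff 2 p).mp (by exact_mod_cast h)
    exact hodd ((Nat.prime_dvd_prime_iff_eq hp Nat.prime_two).mp h2)
  have hQ' : ((Q : ZMod p)) ≠ 0 := fun h => hQ ((ZMod.intCast_zmod_eq_zero_iff_dvd Q p).mp h)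
  by_cases hDz : ((D : ZMod p)) = 0
  · -- degenerate case : legendre symbol is 0, rank is p
    have hleg : legendreSym p D = 0 := (legendreSym.eq_zero_iff p D).mpr hDz
    set a : ZMod p := (P : ZMod p) * (2 : ZMod p)⁻¹ with ha
    have h2a : (2 : ZMod p) * a = (P : ZMod p) := by
      rw [ha, mul_comm (P : ZMod p) _, ← mul_assoc, mul_inv_cancel₀ hp2, one_mul]
    have ha2 : a ^ 2 = (Q : ZMod p) := by
      have h4 : (2 : ZMod p) ^ 2 * a ^ 2 = (2:ZMod p)^2 * (Q : ZMod p) := by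
        have : ((2:ZMod p) * a) ^ 2 = (P : ZMod p) ^ 2 := by rw [h2a]
        have hPQ : (P : ZMod p) ^ 2 = 4 * (Q : ZMod p) := by
          have : ((D : ZMod p)) = (P : ZMod p) ^ 2 - 4 * (Q : ZMod p) := by
            rw [hD]; push_cast; ring
          rw [this] at hDz; linear_combination hDz
        rw [mul_pow] at this
        rw [this, hPQ]; ring
      have h2sq : ((2:ZMod p)^2) ≠ 0 := pow_ne_zero 2 hp2
      exact mul_left_cancel₀ h2sq h4
    have ha0 : a ≠ 0 := by
      intro h; rw [h] at ha2; simp at ha2; exact hQ' ha2.symm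
    have key : ∀ n : ℕ, ((F n : ZMod p)) = (n : ZMod p) * a ^ (n - 1) ∧
        ((F (n+1) : ZMod p)) = ((n+1 : ℕ) : ZMod p) * a ^ n := by
      intro n
      induction n with
      | zero => simp [h0, h1]
      | succ n ih =>
        refine ⟨ih.2, ?_⟩
        have := hrec n
        have hcast : ((F (n+2) : ZMod p)) = (P : ZMod p) * (F (n+1) : ZMod p)
            - (Q : ZMod p) * (F n : ZMod p) := by rw [this]; push_cast; ring
        rw [hcast, ih.2, ih.1, ← h2a, ← ha2]
        cases n with
        | zero => simp
        | succ m =>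
          have : (m + 1 : ℕ) - 1 = m := by omega
          rw [this]
          push_cast
          ring
    have hdvd : ∀ n : ℕ, (p : ℤ) ∣ F n ↔ p ∣ n := by
      intro n
      rw [← ZMod.intCast_zmod_eq_zero_iff_dvd, (key n).1, mul_eq_zero]
      constructor
      · rintro (h | h)
        · exact (ZMod.natCast_eq_zero_iff n p).mp h
        · exact absurd h (pow_ne_zero _ ha0)
      · intro h
        exact Or.inl ((ZMod.natCast_eq_zero_iff n p).mpr h)
    refine ⟨p, ⟨⟨hp.pos, (hdvd p).mpr dvd_rfl⟩, fun n hn => Nat.le_of_dvd hn.1 ((hdvd n).mp hn.2)⟩, ?_⟩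
    rw [hleg]
    simp
  · -- nondegenerate case
    have hε := legendreSym.eq_one_or_neg_one p hDz
    set d : ZMod p := ((D : ZMod p)) with hdd
    set f : (ZMod p)[X] := X ^ 2 - C d with hf
    have hdeg : f.degree ≠ 0 := by
      rw [hf, Polynomial.degree_X_pow_sub_C (by norm_num)]; norm_num
    haveI : Nontrivial (AdjoinRoot f) := AdjoinRoot.nontrivial f hdeg
    set K := AdjoinRoot f with hK
    set of : ZMod p →+* K := AdjoinRoot.of f with hof
    have hinj : Function.Injective of := of.injective
    haveI : CharP K p := charP_of_injective_ringHom hinj p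
    set s : K := AdjoinRoot.root f with hs
    have hs2 : s ^ 2 = of d := by
      have := AdjoinRoot.eval₂_root f
      rw [hf] at this
      simpa [sub_eq_zero] using this
    have hsu : IsUnit s := by
      refine IsUnit.of_mul_eq_one (a := s) (s * of d⁻¹) ?_
      rw [← mul_assoc, ← sq, hs2, ← map_mul, mul_inv_cancel₀ hDz, map_one]
    set i2 : ZMod p := (2 : ZMod p)⁻¹ with hi2
    have h2i : (2 : ZMod p) * i2 = 1 := mul_inv_cancel₀ hp2
    have h2K : (2 : K) * of i2 = 1 := by
      have : ((2 : ZMod p) : K) = of (2 : ZMod p) := (map_ofNat of 2).symm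
      rw [show (2 : K) = of (2 : ZMod p) by simp [map_ofNat], ← map_mul, h2i, map_one]
    set α : K := (of (P : ZMod p) + s) * of i2 with hα
    set β : K := (of (P : ZMod p) - s) * of i2 with hβ
    have hPK : ((P : K)) = of ((P : ZMod p)) := (map_intCast of P).symm
    have hQK : ((Q : K)) = of ((Q : ZMod p)) := (map_intCast of Q).symm
    have hadd : α + β = (P : K) := by
      rw [hα, hβ, hPK]
      have : (of (P:ZMod p) + s) * of i2 + (of (P:ZMod p) - s) * of i2
          = of (P:ZMod p) * ((2:K) * of i2) := by ring
      rw [this, h2K, mul_one]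
    have hsub : α - β = s := by
      rw [hα, hβ]
      have : (of (P:ZMod p) + s) * of i2 - (of (P:ZMod p) - s) * of i2
          = s * ((2:K) * of i2) := by ring
      rw [this, h2K, mul_one]
    have hmul : α * β = (Q : K) := by
      rw [hα, hβ, hQK]
      have : (of (P:ZMod p) + s) * of i2 * ((of (P:ZMod p) - s) * of i2)
          = (of (P:ZMod p) ^ 2 - s ^ 2) * (of i2) ^ 2 := by ring
      rw [this, hs2, ← map_pow, ← map_pow, ← map_sub, ← map_mul]
      congr 1
      have hd4 : (P : ZMod p) ^ 2 - d = 4 * (Q : ZMod p) := by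
        rw [hdd, hD]; push_cast; ring
      rw [hd4]
      have : 4 * (Q : ZMod p) * i2 ^ 2 = (Q : ZMod p) * ((2:ZMod p) * i2) ^ 2 := by ring
      rw [this, h2i, one_pow, mul_one]
    have key : ∀ n : ℕ, ((F n : K)) * s = α ^ n - β ^ n ∧
        ((F (n+1) : K)) * s = α ^ (n+1) - β ^ (n+1) := by
      intro n
      induction n with
      | zero => simp [h0, h1, hsub]
      | succ n ih =>
        refine ⟨ih.2, ?_⟩
        have hcast : ((F (n+2) : K)) = (P : K) * (F (n+1) : K) - (Q : K) * (F n : K) := by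
          rw [hrec n]; push_cast; ring
        have : ((F (n+2) : K)) * s = (P : K) * ((F (n+1) : K) * s)
            - (Q : K) * ((F n : K) * s) := by rw [hcast]; ring
        rw [this, ih.1, ih.2, ← hadd, ← hmul]
        ring
    have hdvd : ∀ n : ℕ, ((p : ℤ) ∣ F n ↔ α ^ n = β ^ n) := by
      intro n
      rw [← ZMod.intCast_zmod_eq_zero_iff_dvd]
      constructor
      · intro h
        have : ((F n : K)) * s = 0 := by
          rw [show ((F n : K)) = of ((F n : ZMod p)) from (map_intCast of (F n)).symm, h,
            map_zero, zero_mul]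
        rw [(key n).1, sub_eq_zero] at this
        exact this
      · intro h
        have h0' : ((F n : K)) * s = 0 := by rw [(key n).1, h, sub_self]
        have : ((F n : K)) = 0 := by
          rcases hsu with ⟨u, hu⟩
          rw [← hu] at h0'
          exact (Units.mul_left_eq_zero u).mp h0'
        rw [show ((F n : K)) = of ((F n : ZMod p)) from (map_intCast of (F n)).symm] at this
        exact hinj (by rw [this, map_zero])
    have hQu : IsUnit ((Q : K)) := by
      rw [hQK]
      exact (hQ'.isUnit).map of
    have hαβu : IsUnit (α * β) := hmul ▸ hQu
    have hαu : IsUnit α := isUnit_of_mul_isUnit_left hαβu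
    have hβu : IsUnit β := isUnit_of_mul_isUnit_right hαβu
    obtain ⟨a, ha⟩ := hαu
    obtain ⟨b, hb⟩ := hβu
    set u : Kˣ := a * b⁻¹ with hu
    have hun : ∀ n : ℕ, (α ^ n = β ^ n ↔ u ^ n = 1) := by
      intro n
      have h1 : u ^ n = a ^ n * (b ^ n)⁻¹ := by rw [hu, mul_pow, inv_pow]
      rw [h1, mul_inv_eq_one]
      constructor
      · intro h
        exact Units.ext (by
          rw [Units.val_pow_eq_pow_val, Units.val_pow_eq_pow_val, ha, hb]; exact h)
      · intro h
        have := congrArg Units.val h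
        rwa [Units.val_pow_eq_pow_val, Units.val_pow_eq_pow_val, ha, hb] at this
    -- Frobenius computations
    obtain ⟨k, hk⟩ := hp.odd_of_ne_two hodd
    have hk2 : p / 2 = k := by omega
    have hsp : s ^ p = s * of (((legendreSym p D : ℤ) : ZMod p)) := by
      have : s ^ p = (s ^ 2) ^ k * s := by
        have h1 : s ^ p = s ^ (2 * k + 1) := by rw [← hk]
        rw [h1, pow_succ, pow_mul]
      rw [this, hs2, ← map_pow, legendreSym.eq_pow, hk2, hdd, mul_comm]
    have hofp : ∀ x : ZMod p, (of x) ^ p = of x := by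
      intro x; rw [← map_pow, ZMod.pow_card]
    have hmain : ∃ m : ℕ, 0 < m ∧ u ^ m = 1 ∧ (m : ℤ) = (p : ℤ) - legendreSym p D := by
      rcases hε with hε | hε
      · -- symbol = 1 : s^p = s, α^p = α
        have hsps : s ^ p = s := by rw [hsp, hε]; simp
        have hap : α ^ p = α := by
          rw [hα, mul_pow, add_pow_char, hsps, hofp, hofp]
        have hbp : β ^ p = β := by
          rw [hβ, sub_eq_add_neg, mul_pow, add_pow_char, Odd.neg_pow ⟨k, by omega⟩,
            hsps, hofp, hofp, ← sub_eq_add_neg]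
        refine ⟨p - 1, by omega, ?_, by rw [hε]; omega⟩
        have hau : a ^ (p - 1) = 1 := by
          have h1 : a ^ p = a := Units.ext (by rw [Units.val_pow_eq_pow_val, ha]; exact hap)
          have h2 : a ^ (p - 1) * a = 1 * a := by
            rw [← pow_succ, show p - 1 + 1 = p by omega, h1, one_mul]
          exact mul_right_cancel h2
        have hbu : b ^ (p - 1) = 1 := by
          have h1 : b ^ p = b := Units.ext (by rw [Units.val_pow_eq_pow_val, hb]; exact hbp)
          have h2 : b ^ (p - 1) * b = 1 * b := by
            rw [← pow_succ, show p - 1 + 1 = p by omega, h1, one_mul]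
          exact mul_right_cancel h2
        have : u ^ (p - 1) = a ^ (p - 1) * (b ^ (p - 1))⁻¹ := by rw [hu, mul_pow, inv_pow]
        rw [this, hau, hbu, inv_one, mul_one]
      · -- symbol = -1 : s^p = -s, α^p = β, β^p = α
        have hsps : s ^ p = -s := by
          rw [hsp, hε]
          push_cast
          rw [map_neg, map_one]
          ring
        have hap : α ^ p = β := by
          rw [hα, hβ, mul_pow, add_pow_char, hsps, hofp, hofp, ← sub_eq_add_neg]
        have hbp : β ^ p = α := by
          rw [hα, hβ, sub_eq_add_neg, mul_pow, add_pow_char, hofp, hofp,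
            Odd.neg_pow ⟨k, by omega⟩, hsps, neg_neg]
        refine ⟨p + 1, by omega, ?_, by rw [hε]; push_cast; ring⟩
        have hab : a ^ (p + 1) = b ^ (p + 1) := Units.ext (by
          rw [Units.val_pow_eq_pow_val, Units.val_pow_eq_pow_val, ha, hb, pow_succ, pow_succ,
            hap, hbp, mul_comm])
        have : u ^ (p + 1) = a ^ (p + 1) * (b ^ (p + 1))⁻¹ := by rw [hu, mul_pow, inv_pow]
        rw [this, hab, mul_inv_cancel]
    obtain ⟨m, hm0, hum, hmcast⟩ := hmain
    set r := orderOf u with hr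
    have hrd : r ∣ m := orderOf_dvd_of_pow_eq_one hum
    have hr0 : 0 < r := by
      rcases Nat.eq_zero_or_pos r with h | h
      · rw [h] at hrd; exact absurd (Nat.eq_zero_of_zero_dvd hrd) (by omega)
      · exact h
    refine ⟨r, ⟨⟨hr0, (hdvd r).mpr ((hun r).mpr (pow_orderOf_eq_one u))⟩,
      fun n hn => Nat.le_of_dvd hn.1 (orderOf_dvd_iff_pow_eq_one.mpr ((hun n).mp ((hdvd n).mp hn.2)))⟩, ?_⟩
    rw [← hmcast]
    exact_mod_cast hrd
end

section
/- Let P, Q ∈ ℤ, p a prime with p ∤ Q, and let (F_n) be the Lucas sequence for f(t) = t² - Pt + Q. The rank r(p) (least positive n with p | F_n) equals the order of the class of (0,1) in the group G_{𝔽_p}(f) = (𝔽_p[t]/(f))^×/𝔽_p^×, where (a₁,a₀) corresponds to a₁ - a₀t; i.e., r(p) is the multiplicative order of the class of -t in (𝔽_p[t]/(f(t)))^×/𝔽_p^×. -/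
set_option maxHeartbeats 1000000
set_option synthInstance.maxHeartbeats 400000

open Polynomial

/-- Every subgroup of the unit group of a commutative polynomial quotient ring is normal
(helper instance to make quotient groups elaborate). -/
instance polyQuotSubgroupNormal (R : Type*) [CommRing R] (I : Ideal (Polynomial R))
    (S : Subgroup (Polynomial R ⧸ I)ˣ) : S.Normal :=
  ⟨fun n hn g => by rw [mul_comm g n, mul_inv_cancel_right]; exact hn⟩

/-- The quotient ring `𝔽_p[t]/(t² - Pt + Q)`. -/
abbrev LaxtonRing (p : ℕ) (P Q : ZMod p) : Type :=
  Polynomial (ZMod p) ⧸ Ideal.span {(X : (ZMod p)[X]) ^ 2 - C P * X + C Q}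

/-- The subgroup of scalars: the range of `R^× → A^×` induced by the algebra map. -/
def scalarUnits (R A : Type*) [CommRing R] [CommRing A] [Algebra R A] :
    Subgroup Aˣ :=
  (Units.map (algebraMap R A).toMonoidHom).range

/-- The group `G_{𝔽_p}(f) = (𝔽_p[t]/(f))^×/𝔽_p^×`. -/
abbrev LaxtonGroupFp (p : ℕ) (P Q : ZMod p) : Type :=
  (LaxtonRing p P Q)ˣ ⧸ scalarUnits (ZMod p) (LaxtonRing p P Q)

lemma laxton_aux_pow {K : Type*} [CommRing K] (P' Q' : K) (G : ℕ → K)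
    (hG0 : G 0 = 0) (hG1 : G 1 = 1)
    (hGrec : ∀ n, G (n + 2) = P' * G (n + 1) - Q' * G n) (n : ℕ) :
    (Ideal.Quotient.mk (Ideal.span {(X : K[X]) ^ 2 - C P' * X + C Q'}) X) ^ (n + 1) =
      Ideal.Quotient.mk _ (C (G (n + 1)) * X - C (Q' * G n)) := by
  induction n with
  | zero =>
    rw [hG1, hG0, mul_zero, map_zero, map_one, one_mul, sub_zero, pow_one]
  | succ n ih =>
    rw [pow_succ _ (n+1), ih, ← map_mul, Ideal.Quotient.eq, Ideal.mem_span_singleton]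
    refine ⟨C (G (n + 1)), ?_⟩
    rw [hGrec]
    simp only [map_sub, map_mul]
    ring

/-- The rank `r(p)` of the Lucas sequence (least positive `n` with `p ∣ F n`) equals
the multiplicative order of the class of `-t` (i.e. of `(0,1)`) in
`G_{𝔽_p}(f) = (𝔽_p[t]/(f))^×/𝔽_p^×`. -/
theorem laxton_stmt18 (p : ℕ) [Fact p.Prime] (P Q : ℤ) (hQ : (Q : ZMod p) ≠ 0)
    (F : ℕ → ℤ) (h0 : F 0 = 0) (h1 : F 1 = 1)
    (hrec : ∀ n : ℕ, F (n + 2) = P * F (n + 1) - Q * F n)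
    (u : (LaxtonRing p (P : ZMod p) (Q : ZMod p))ˣ)
    (hu : (u : LaxtonRing p (P : ZMod p) (Q : ZMod p)) = Ideal.Quotient.mk _ (-X)) :
    IsLeast {n : ℕ | 0 < n ∧ (p : ℤ) ∣ F n}
      (orderOf (QuotientGroup.mk u : LaxtonGroupFp p (P : ZMod p) (Q : ZMod p))) := by
  set K := ZMod p with hK
  set f : K[X] := X ^ 2 - C (P : K) * X + C (Q : K) with hfdef
  have hfq : f = C (1:K) * X ^ 2 + C (-(P:K)) * X + C (Q:K) := by
    simp only [map_one, map_neg, one_mul]; ring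
  have hdegf : f.degree = 2 := by rw [hfq]; exact degree_quadratic one_ne_zero
  have hf0 : f ≠ 0 := fun h => by simp [h] at hdegf
  haveI : Nontrivial (LaxtonRing p (P : K) (Q : K)) := by
    refine Ideal.Quotient.nontrivial_iff.mpr (Ideal.span_singleton_ne_top ?_)
    intro hunit
    have := degree_eq_zero_of_isUnit hunit
    rw [hdegf] at this
    exact absurd this (by decide)
  haveI : Finite (LaxtonRing p (P : K) (Q : K)) := by
    have pb : PowerBasis K (AdjoinRoot f) := AdjoinRoot.powerBasis hf0
    haveI : Module.Finite K (AdjoinRoot f) := pb.finite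
    exact Module.finite_of_finite K (M := AdjoinRoot f)
  haveI : Finite (LaxtonGroupFp p (P : K) (Q : K)) := Quotient.finite _
  set G : ℕ → K := fun n => ((F n : ℤ) : K) with hGdef
  have hG0 : G 0 = 0 := by simp [hGdef, h0]
  have hG1 : G 1 = 1 := by simp [hGdef, h1]
  have hGrec : ∀ n, G (n + 2) = (P : K) * G (n + 1) - (Q : K) * G n := by
    intro n
    simp only [hGdef, hrec n]
    push_cast
    exact congrArg₂ (· - ·) (Int.cast_mul (α := ZMod p) P (F (n + 1))) (Int.cast_mul (α := ZMod p) Q (F n))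
  have key : ∀ n : ℕ,
      ((QuotientGroup.mk u : LaxtonGroupFp p (P : K) (Q : K)) ^ n = 1 ↔ (p : ℤ) ∣ F n) := by
    intro n
    rw [← QuotientGroup.mk_pow, QuotientGroup.eq_one_iff]
    show u ^ n ∈ (Units.map (algebraMap K (LaxtonRing p (P : K) (Q : K))).toMonoidHom).range
      ↔ _
    rw [MonoidHom.mem_range]
    match n with
    | 0 =>
      simp only [pow_zero, h0, dvd_zero, iff_true]
      exact ⟨1, map_one _⟩
    | (m+1) =>
      have hpow := laxton_aux_pow (P : K) (Q : K) G hG0 hG1 hGrec m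
      set ε : K := (-1 : K) ^ (m + 1) with hε
      have hεne : ε ≠ 0 := pow_ne_zero _ (neg_ne_zero.mpr one_ne_zero)
      have hval : ((u : LaxtonRing p (P : K) (Q : K)) ^ (m + 1)) =
          Ideal.Quotient.mk (Ideal.span {f})
            (C ε * (C (G (m + 1)) * X - C ((Q : K) * G m))) := by
        calc ((u : LaxtonRing p (P : K) (Q : K)) ^ (m + 1))
            = (Ideal.Quotient.mk (Ideal.span {f}) (-X)) ^ (m+1) := by rw [hu]
          _ = Ideal.Quotient.mk (Ideal.span {f}) ((-X) ^ (m+1)) := (map_pow _ _ _).symm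
          _ = Ideal.Quotient.mk (Ideal.span {f}) (C ε * X ^ (m+1)) := by
              congr 1
              rw [hε, map_pow, map_neg, map_one]
              ring
          _ = Ideal.Quotient.mk (Ideal.span {f}) (C ε) *
                (Ideal.Quotient.mk (Ideal.span {f}) X) ^ (m+1) := by simp only [map_mul, map_pow]
          _ = Ideal.Quotient.mk (Ideal.span {f}) (C ε) *
                Ideal.Quotient.mk (Ideal.span {f})
                  (C (G (m + 1)) * X - C ((Q : K) * G m)) := by rw [hpow]
          _ = _ := (map_mul _ _ _).symm
      constructor
      · rintro ⟨r, hr⟩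
        have hr' : Ideal.Quotient.mk (Ideal.span {f}) (C (r : K)) =
            Ideal.Quotient.mk (Ideal.span {f})
              (C ε * (C (G (m + 1)) * X - C ((Q : K) * G m))) := by
          rw [← hval, ← Units.val_pow_eq_pow_val, ← hr]
          rfl
        rw [Ideal.Quotient.eq, Ideal.mem_span_singleton] at hr'
        have hrearr : (C (r : K) - C ε * (C (G (m + 1)) * X - C ((Q : K) * G m)))
            = C (-(ε * G (m+1))) * X + C ((r : K) + ε * ((Q:K) * G m)) := by
          simp only [map_add, map_neg, map_mul]
          ring
        rw [hrearr] at hr'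
        have hg0 : (C (-(ε * G (m+1))) * X + C ((r : K) + ε * ((Q:K) * G m))) = 0 := by
          refine eq_zero_of_dvd_of_degree_lt hr' ?_
          rw [hdegf]
          exact lt_of_le_of_lt degree_linear_le (by decide)
        have hcoeff := congrArg (fun q => Polynomial.coeff q 1) hg0
        simp only [coeff_add, coeff_C_mul, coeff_X_one, coeff_C, mul_one,
          coeff_zero, if_neg (one_ne_zero), add_zero, neg_eq_zero] at hcoeff
        have ha : G (m + 1) = 0 := by
          rcases mul_eq_zero.mp hcoeff with h | h
          · exact absurd h hεne
          · exact h
        exact (ZMod.intCast_zmod_eq_zero_iff_dvd _ p).mp ha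
      · intro hdvd
        have ha : G (m + 1) = 0 := (ZMod.intCast_zmod_eq_zero_iff_dvd _ p).mpr hdvd
        set c : K := -(ε * ((Q : K) * G m)) with hc
        have hcval : ((u : LaxtonRing p (P : K) (Q : K)) ^ (m + 1)) =
            algebraMap K (LaxtonRing p (P : K) (Q : K)) c := by
          rw [hval, ha]
          show _ = Ideal.Quotient.mk (Ideal.span {f}) (C c)
          congr 1
          rw [hc]
          simp only [map_zero, map_neg, map_mul, zero_mul, zero_sub]
          ring
        have hcne : c ≠ 0 := by
          intro h
          apply Units.ne_zero (u ^ (m+1))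
          rw [Units.val_pow_eq_pow_val, hcval, h, map_zero]
        refine ⟨Units.mk0 c hcne, Units.ext ?_⟩
        rw [Units.coe_map]
        show algebraMap K (LaxtonRing p (P : K) (Q : K)) c = _
        rw [Units.val_pow_eq_pow_val, hcval]
  constructor
  · exact ⟨orderOf_pos _, (key _).mp (pow_orderOf_eq_one _)⟩
  · rintro n ⟨hn, hd⟩
    exact Nat.le_of_dvd hn (orderOf_dvd_of_pow_eq_one ((key n).mpr hd))
end
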